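/- Reduction correctness for strong NP-hardness with non-fixed n. Fix a rational d ≥ 0. Let m′ ≥ 1 and n = ⌈2(m′+d)⌉. Let X₁ be a list of 3m′ positive integers, let M be the rational number such that the sum of X₁ equals m′·n·(1 − d/(n−m′))·M, assume n·M is a positive integer and every element of X₁ is at most n(1 − d/(n−m′))·M. Let X₂ be obtained from X₁ by replacing each element x by nM − x, and let X₃ consist of X₂ together with 2(n−m′) additional jobs of length nM. Let S = (Σ_{x∈X₃} x)/n. Then X₁ can be partitioned into m′ triples each of sum n(1 − d/(n−m′))·M if and only if X₃ admits an integral partition among n identical machines with makespan at most S + d·M. -/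

import Mathlib

/-- The job lengths of the instance `X₃`: the inverted jobs `nM - x` (encoded with `K = nM`)
together with `2*(n-m')` jobs of length `K`. -/
def x3jobs (m' K : ℕ) (x1 : Fin (3 * m') → ℕ) (n : ℕ) :
    (Fin (3 * m') ⊕ Fin (2 * (n - m'))) → ℕ :=
  Sum.elim (fun j => K - x1 j) (fun _ => K)

/-- Structure extraction: given fiberwise data `A` (big-job counts), `B` (medium-job counts),
`X` (sums of original numbers) satisfying the load bound, every machine is either a triple
machine `(A,B,X) = (0,3,c)` or a big-pair machine `(A,B) = (2,0)`. -/
lemma aux_struct (n m' : ℕ) (hm'n : m' < n) (c K : ℚ)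
    (hc1 : 1 ≤ c) (hcK : c ≤ K)
    (A B : Fin n → ℕ) (X : Fin n → ℚ)
    (hL : ∀ i, (B i : ℚ) * K - X i + (A i : ℚ) * K ≤ 3 * K - c)
    (hXB : ∀ i, (B i : ℚ) ≤ X i)
    (hSA : ∑ i, A i = 2 * (n - m'))
    (hSB : ∑ i, B i = 3 * m')
    (hSX : ∑ i, X i = (m' : ℚ) * c) :
    ∀ i, (A i = 0 ∧ B i = 3 ∧ X i = c) ∨ (A i = 2 ∧ B i = 0) := by
  have hεnn : ∀ i, 0 ≤ 2 * c - (A i : ℚ) * c - (B i : ℚ) * c + X i := by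
    intro i
    rcases le_or_gt 3 (A i + B i) with h3 | h3
    · have h3q : (3 : ℚ) ≤ (A i : ℚ) + B i := by exact_mod_cast h3
      have hp := mul_nonneg (by linarith : (0:ℚ) ≤ (A i : ℚ) + B i - 3)
        (by linarith : (0:ℚ) ≤ K - c)
      nlinarith [hL i]
    · have h2q : (A i : ℚ) + B i ≤ 2 := by exact_mod_cast Nat.lt_succ_iff.mp h3
      have hp := mul_nonneg (by linarith : (0:ℚ) ≤ 2 - ((A i : ℚ) + B i))
        (by linarith : (0:ℚ) ≤ c)
      have hb := hXB i
      have hbn : (0:ℚ) ≤ (B i : ℚ) := Nat.cast_nonneg _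
      nlinarith
  have hA' : (∑ i, (A i : ℚ)) = 2 * ((n : ℚ) - (m' : ℚ)) := by
    have : ((∑ i, A i : ℕ) : ℚ) = ((2 * (n - m') : ℕ) : ℚ) := by rw [hSA]
    push_cast [Nat.cast_sub hm'n.le] at this
    exact this
  have hB' : (∑ i, (B i : ℚ)) = 3 * (m' : ℚ) := by
    have : ((∑ i, B i : ℕ) : ℚ) = ((3 * m' : ℕ) : ℚ) := by rw [hSB]
    push_cast at this
    exact this
  have hεsum : ∑ i, (2 * c - (A i : ℚ) * c - (B i : ℚ) * c + X i) = 0 := by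
    rw [Finset.sum_add_distrib, Finset.sum_sub_distrib, Finset.sum_sub_distrib,
      Finset.sum_const, ← Finset.sum_mul, ← Finset.sum_mul, hSX, hA', hB',
      Finset.card_univ, Fintype.card_fin, nsmul_eq_mul]
    ring
  have hε0 : ∀ i, 2 * c - (A i : ℚ) * c - (B i : ℚ) * c + X i = 0 := by
    intro i
    exact (Finset.sum_eq_zero_iff_of_nonneg (fun i _ => hεnn i)).mp hεsum i (Finset.mem_univ i)
  have hXeq : ∀ i, X i = ((A i : ℚ) + (B i : ℚ) - 2) * c := by
    intro i
    have := hε0 i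
    linarith [this]
  have h6 : ∀ i, 6 ≤ 2 * B i + 3 * A i := by
    intro i
    by_contra hcon
    push_neg at hcon
    have hxe := hXeq i
    have hxb := hXB i
    rcases (by omega : (A i = 0 ∧ B i = 0) ∨ (A i = 0 ∧ B i = 1) ∨ (A i = 0 ∧ B i = 2) ∨
        (A i = 1 ∧ B i = 0) ∨ (A i = 1 ∧ B i = 1)) with
      ⟨hA0, hB0⟩ | ⟨hA0, hB0⟩ | ⟨hA0, hB0⟩ | ⟨hA0, hB0⟩ | ⟨hA0, hB0⟩ <;>
        simp only [hA0, hB0] at hxe hxb <;> push_cast at hxe hxb <;> linarith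
  have hsum6 : ∑ i : Fin n, (6 : ℕ) = ∑ i : Fin n, (2 * B i + 3 * A i) := by
    rw [Finset.sum_add_distrib, ← Finset.mul_sum, ← Finset.mul_sum, hSA, hSB,
      Finset.sum_const, Finset.card_univ, Fintype.card_fin, smul_eq_mul]
    omega
  have heq : ∀ i, 2 * B i + 3 * A i = 6 := by
    intro i
    exact ((Finset.sum_eq_sum_iff_of_le (fun i _ => h6 i)).mp hsum6 i (Finset.mem_univ i)).symm
  intro i
  have h2 := heq i
  rcases (by omega : (A i = 0 ∧ B i = 3) ∨ (A i = 2 ∧ B i = 0)) with ⟨h1, h2'⟩ | h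
  · left
    refine ⟨h1, h2', ?_⟩
    have hxe := hXeq i
    rw [h1, h2'] at hxe
    push_cast at hxe
    linarith
  · right; exact h

/-- reduction correctness for strong NP-hardness with non-fixed `n`:
`X₁` can be partitioned into `m'` triples of equal sum `n(1 - d/(n-m'))·M` iff `X₃` admits an
integral partition among `n = ⌈2(m'+d)⌉` identical machines with makespan at most `S + d·M`. -/
theorem stmt_14 (d : ℚ) (hd : 0 ≤ d) (m' : ℕ) (hm' : 1 ≤ m')
    (n : ℕ) (hn : (n : ℤ) = ⌈2 * ((m' : ℚ) + d)⌉)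
    (x1 : Fin (3 * m') → ℕ) (hx1 : ∀ j, 0 < x1 j)
    (M : ℚ)
    (hsum : (∑ j, (x1 j : ℚ)) = (m' : ℚ) * (n : ℚ) * (1 - d / ((n : ℚ) - (m' : ℚ))) * M)
    (K : ℕ) (hK : 0 < K) (hKM : (K : ℚ) = (n : ℚ) * M)
    (hbound : ∀ j, (x1 j : ℚ) ≤ (n : ℚ) * (1 - d / ((n : ℚ) - (m' : ℚ))) * M) :
    (∃ Q : Fin (3 * m') → Fin m',
        (∀ k, (Finset.univ.filter (fun j => Q j = k)).card = 3) ∧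
        (∀ k, (∑ j ∈ Finset.univ.filter (fun j => Q j = k), (x1 j : ℚ))
            = (n : ℚ) * (1 - d / ((n : ℚ) - (m' : ℚ))) * M)) ↔
    (∃ P : (Fin (3 * m') ⊕ Fin (2 * (n - m'))) → Fin n,
        ∀ i : Fin n,
          (∑ j ∈ Finset.univ.filter (fun j => P j = i), (x3jobs m' K x1 n j : ℚ))
            ≤ (∑ j : Fin (3 * m') ⊕ Fin (2 * (n - m')), (x3jobs m' K x1 n j : ℚ)) / (n : ℚ)
              + d * M) := by
  classical
  -- basic numeric facts
  have hnm : 2 * ((m' : ℚ) + d) ≤ (n : ℚ) := by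
    have h := Int.le_ceil (2 * ((m' : ℚ) + d))
    rw [← hn] at h
    exact_mod_cast h
  have hm'n : m' < n := by
    have h1 : (m' : ℚ) + 1 ≤ (n : ℚ) := by
      have : (1 : ℚ) ≤ (m' : ℚ) := by exact_mod_cast hm'
      linarith
    exact_mod_cast h1
  have hnm0 : 0 < (n : ℚ) - (m' : ℚ) := by
    have : (m' : ℚ) < (n : ℚ) := by exact_mod_cast hm'n
    linarith
  have hnpos : 0 < n := lt_of_le_of_lt (Nat.zero_le m') hm'n
  have hn0 : ((n : ℚ)) ≠ 0 := Nat.cast_ne_zero.mpr hnpos.ne'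
  have hnq : (0 : ℚ) < (n : ℚ) := by exact_mod_cast hnpos
  have hKq : (0 : ℚ) < (K : ℚ) := by exact_mod_cast hK
  have hMpos : 0 < M := by
    rcases mul_pos_iff.mp (hKM ▸ hKq) with ⟨_, h⟩ | ⟨h1, _⟩
    · exact h
    · linarith
  obtain ⟨c, hc⟩ : ∃ c : ℚ, (n : ℚ) * (1 - d / ((n : ℚ) - (m' : ℚ))) * M = c := ⟨_, rfl⟩
  have hbound' : ∀ j, (x1 j : ℚ) ≤ c := fun j => hc ▸ hbound j
  have hsum' : (∑ j, (x1 j : ℚ)) = (m' : ℚ) * c := by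
    rw [← hc, hsum]; ring
  have hc1 : 1 ≤ c := by
    have h0 : (0 : ℕ) < 3 * m' := by omega
    have h1 : (1 : ℚ) ≤ (x1 ⟨0, h0⟩ : ℚ) := by exact_mod_cast hx1 ⟨0, h0⟩
    linarith [hbound' ⟨0, h0⟩]
  have hdel : (K : ℚ) - c = (K : ℚ) * d / ((n : ℚ) - (m' : ℚ)) := by
    rw [← hc, hKM]
    field_simp
    ring
  have hδ : 0 ≤ (K : ℚ) - c := by
    rw [hdel]
    positivity
  have hcK : c ≤ (K : ℚ) := by linarith
  have hxK : ∀ j, x1 j ≤ K := fun j => by exact_mod_cast (hbound' j).trans hcK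
  have hcastK : ∀ j, ((K - x1 j : ℕ) : ℚ) = (K : ℚ) - (x1 j : ℚ) := fun j => by
    push_cast [Nat.cast_sub (hxK j)]
    ring
  have hd2 : ((n : ℚ) - (m' : ℚ)) * ((K : ℚ) - c) = d * (K : ℚ) := by
    rw [hdel]
    field_simp
  -- total sum and threshold
  have hT : (∑ j : Fin (3 * m') ⊕ Fin (2 * (n - m')), (x3jobs m' K x1 n j : ℚ)) / (n : ℚ)
      + d * M = 3 * (K : ℚ) - c := by
    have ha : ∑ a : Fin (3 * m'), ((x3jobs m' K x1 n (Sum.inl a) : ℕ) : ℚ)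
        = 3 * (m' : ℚ) * (K : ℚ) - (m' : ℚ) * c := by
      have h1 : ∀ a : Fin (3 * m'), ((x3jobs m' K x1 n (Sum.inl a) : ℕ) : ℚ)
          = (K : ℚ) - (x1 a : ℚ) := fun a => hcastK a
      rw [Finset.sum_congr rfl (fun a _ => h1 a), Finset.sum_sub_distrib,
        Finset.sum_const, Finset.card_univ, Fintype.card_fin, hsum', nsmul_eq_mul]
      push_cast
      ring
    have hb : ∑ b : Fin (2 * (n - m')), ((x3jobs m' K x1 n (Sum.inr b) : ℕ) : ℚ)
        = 2 * ((n : ℚ) - (m' : ℚ)) * (K : ℚ) := by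
      have h1 : ∀ b : Fin (2 * (n - m')), ((x3jobs m' K x1 n (Sum.inr b) : ℕ) : ℚ) = (K : ℚ) :=
        fun b => rfl
      rw [Finset.sum_congr rfl (fun b _ => h1 b), Finset.sum_const, Finset.card_univ, Fintype.card_fin, nsmul_eq_mul]
      push_cast [Nat.cast_sub hm'n.le]
      ring
    rw [Fintype.sum_sum_type, ha, hb, div_add' _ _ _ hn0, div_eq_iff hn0]
    linear_combination (-1 : ℚ) * hd2 - d * hKM
  -- load decomposition
  have hload : ∀ (P : (Fin (3 * m') ⊕ Fin (2 * (n - m'))) → Fin n) (i : Fin n),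
      (∑ j ∈ Finset.univ.filter (fun j => P j = i), (x3jobs m' K x1 n j : ℚ))
        = (∑ j ∈ Finset.univ.filter (fun j => P (Sum.inl j) = i), ((K : ℚ) - (x1 j : ℚ)))
          + ((Finset.univ.filter (fun k => P (Sum.inr k) = i)).card : ℚ) * (K : ℚ) := by
    intro P i
    rw [Finset.sum_filter, Fintype.sum_sum_type, ← Finset.sum_filter, ← Finset.sum_filter]
    congr 1
    · exact Finset.sum_congr rfl fun j _ => hcastK j
    · simp only [x3jobs, Sum.elim_inr]
      rw [Finset.sum_const, nsmul_eq_mul]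
  constructor
  · -- forward direction
    rintro ⟨Q, hQ3, hQs⟩
    have hQs' : ∀ k, (∑ j ∈ Finset.univ.filter (fun j => Q j = k), (x1 j : ℚ)) = c :=
      fun k => (hQs k).trans hc
    refine ⟨Sum.elim (fun a => (⟨(Q a : ℕ), lt_trans (Q a).isLt hm'n⟩ : Fin n))
      (fun k => (⟨m' + (k : ℕ) / 2, by have := k.isLt; omega⟩ : Fin n)), ?_⟩
    intro i
    rw [hload, hT]
    simp only [Sum.elim_inl, Sum.elim_inr]
    by_cases hi : (i : ℕ) < m'
    · have hk0 : (Finset.univ.filter (fun k : Fin (2 * (n - m')) =>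
          (⟨m' + (k : ℕ) / 2, by have := k.isLt; omega⟩ : Fin n) = i)) = ∅ := by
        rw [Finset.filter_eq_empty_iff]
        intro k _
        intro hk
        have := congrArg Fin.val hk
        simp only [Fin.val_mk] at this
        omega
      have hfeq : (Finset.univ.filter (fun j : Fin (3 * m') =>
          (⟨(Q j : ℕ), lt_trans (Q j).isLt hm'n⟩ : Fin n) = i))
          = Finset.univ.filter (fun j => Q j = ⟨(i : ℕ), hi⟩) := by
        apply Finset.filter_congr
        intro j _
        constructor
        · intro h
          have := congrArg Fin.val h
          simp only [Fin.val_mk] at this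
          exact Fin.ext this
        · intro h
          apply Fin.ext
          simp only [Fin.val_mk]
          exact congrArg Fin.val h
      erw [hk0, hfeq]
      rw [Finset.sum_sub_distrib, Finset.sum_const, hQ3 ⟨(i : ℕ), hi⟩,
        hQs' ⟨(i : ℕ), hi⟩]
      simp only [Finset.card_empty, Nat.cast_zero, zero_mul, add_zero, nsmul_eq_mul,
        Nat.cast_ofNat]
      linarith
    · push_neg at hi
      have hfeq : (Finset.univ.filter (fun j : Fin (3 * m') =>
          (⟨(Q j : ℕ), lt_trans (Q j).isLt hm'n⟩ : Fin n) = i)) = ∅ := by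
        rw [Finset.filter_eq_empty_iff]
        intro j _
        intro hk
        have := congrArg Fin.val hk
        simp only [Fin.val_mk] at this
        have := (Q j).isLt
        omega
      have h1 : 2 * ((i : ℕ) - m') < 2 * (n - m') := by have := i.isLt; omega
      have h2 : 2 * ((i : ℕ) - m') + 1 < 2 * (n - m') := by have := i.isLt; omega
      have hpair : (Finset.univ.filter (fun k : Fin (2 * (n - m')) =>
          (⟨m' + (k : ℕ) / 2, by have := k.isLt; omega⟩ : Fin n) = i))
          = {(⟨2 * ((i : ℕ) - m'), h1⟩ : Fin (2 * (n - m'))), ⟨2 * ((i : ℕ) - m') + 1, h2⟩} := by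
        ext k
        have hk := k.isLt
        simp only [Finset.mem_filter, Finset.mem_univ, true_and, Finset.mem_insert,
          Finset.mem_singleton, Fin.ext_iff, Fin.val_mk]
        omega
      have hcard : (Finset.univ.filter (fun k : Fin (2 * (n - m')) =>
          (⟨m' + (k : ℕ) / 2, by have := k.isLt; omega⟩ : Fin n) = i)).card = 2 := by
        rw [hpair, Finset.card_insert_of_notMem (by
          simp only [Finset.mem_singleton, Fin.ext_iff, Fin.val_mk]
          omega), Finset.card_singleton]
      erw [hfeq, hcard]
      simp
      linarith
  · -- backward direction
    rintro ⟨P, hP⟩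
    have hL : ∀ i : Fin n,
        (((Finset.univ.filter (fun j : Fin (3 * m') => P (Sum.inl j) = i)).card : ℚ)) * (K : ℚ)
          - (∑ j ∈ Finset.univ.filter (fun j : Fin (3 * m') => P (Sum.inl j) = i), (x1 j : ℚ))
          + (((Finset.univ.filter (fun k : Fin (2 * (n - m')) => P (Sum.inr k) = i)).card : ℚ))
            * (K : ℚ) ≤ 3 * (K : ℚ) - c := by
      intro i
      have h := hP i
      rw [hload P i, hT] at h
      have e1 : (∑ j ∈ Finset.univ.filter (fun j : Fin (3 * m') => P (Sum.inl j) = i),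
          ((K : ℚ) - (x1 j : ℚ)))
          = ((Finset.univ.filter (fun j : Fin (3 * m') => P (Sum.inl j) = i)).card : ℚ) * (K : ℚ)
            - (∑ j ∈ Finset.univ.filter (fun j : Fin (3 * m') => P (Sum.inl j) = i), (x1 j : ℚ)) := by
        rw [Finset.sum_sub_distrib, Finset.sum_const, nsmul_eq_mul]
      linarith
    have hXB : ∀ i : Fin n,
        (((Finset.univ.filter (fun j : Fin (3 * m') => P (Sum.inl j) = i)).card : ℚ))
          ≤ ∑ j ∈ Finset.univ.filter (fun j : Fin (3 * m') => P (Sum.inl j) = i), (x1 j : ℚ) := by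
      intro i
      have := Finset.card_nsmul_le_sum
        (Finset.univ.filter (fun j : Fin (3 * m') => P (Sum.inl j) = i))
        (fun j => (x1 j : ℚ)) 1 (fun j _ => by show (1 : ℚ) ≤ (x1 j : ℚ); exact_mod_cast hx1 j)
      simpa using this
    have hSA : ∑ i : Fin n,
        (Finset.univ.filter (fun k : Fin (2 * (n - m')) => P (Sum.inr k) = i)).card
        = 2 * (n - m') := by
      have := Finset.card_eq_sum_card_fiberwise
        (f := fun k : Fin (2 * (n - m')) => P (Sum.inr k)) (s := Finset.univ) (t := Finset.univ)
        (fun x _ => Finset.mem_univ _)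
      simpa using this.symm
    have hSB : ∑ i : Fin n,
        (Finset.univ.filter (fun j : Fin (3 * m') => P (Sum.inl j) = i)).card = 3 * m' := by
      have := Finset.card_eq_sum_card_fiberwise
        (f := fun j : Fin (3 * m') => P (Sum.inl j)) (s := Finset.univ) (t := Finset.univ)
        (fun x _ => Finset.mem_univ _)
      simpa using this.symm
    have hSX : ∑ i : Fin n,
        (∑ j ∈ Finset.univ.filter (fun j : Fin (3 * m') => P (Sum.inl j) = i), (x1 j : ℚ))
        = (m' : ℚ) * c := by
      rw [Finset.sum_fiberwise_of_maps_to (fun x _ => Finset.mem_univ _)]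
      exact hsum'
    have hstruct := aux_struct n m' hm'n c (K : ℚ) hc1 hcK
      (fun i => (Finset.univ.filter (fun k : Fin (2 * (n - m')) => P (Sum.inr k) = i)).card)
      (fun i => (Finset.univ.filter (fun j : Fin (3 * m') => P (Sum.inl j) = i)).card)
      (fun i => ∑ j ∈ Finset.univ.filter (fun j : Fin (3 * m') => P (Sum.inl j) = i), (x1 j : ℚ))
      hL hXB hSA hSB hSX
    have hstruct' : ∀ i : Fin n,
        ((Finset.univ.filter (fun k : Fin (2 * (n - m')) => P (Sum.inr k) = i)).card = 0 ∧
          (Finset.univ.filter (fun j : Fin (3 * m') => P (Sum.inl j) = i)).card = 3 ∧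
          (∑ j ∈ Finset.univ.filter (fun j : Fin (3 * m') => P (Sum.inl j) = i), (x1 j : ℚ)) = c)
        ∨ ((Finset.univ.filter (fun k : Fin (2 * (n - m')) => P (Sum.inr k) = i)).card = 2 ∧
          (Finset.univ.filter (fun j : Fin (3 * m') => P (Sum.inl j) = i)).card = 0) :=
      hstruct
    -- the set of triple machines
    have hmemT : ∀ j : Fin (3 * m'), P (Sum.inl j) ∈ Finset.univ.filter (fun i : Fin n =>
        (Finset.univ.filter (fun k : Fin (2 * (n - m')) => P (Sum.inr k) = i)).card = 0) := by
      intro j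
      rcases hstruct' (P (Sum.inl j)) with ⟨h1, _, _⟩ | ⟨h1, h2⟩
      · exact Finset.mem_filter.mpr ⟨Finset.mem_univ _, h1⟩
      · exfalso
        have hj : j ∈ Finset.univ.filter (fun j' : Fin (3 * m') =>
            P (Sum.inl j') = P (Sum.inl j)) := by simp
        have hc0 := Finset.card_pos.mpr ⟨j, hj⟩
        omega
    have hTscard : (Finset.univ.filter (fun i : Fin n =>
        (Finset.univ.filter (fun k : Fin (2 * (n - m')) => P (Sum.inr k) = i)).card = 0)).card
        = m' := by
      have hsplit := Finset.sum_filter_add_sum_filter_not Finset.univ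
        (fun i : Fin n =>
          (Finset.univ.filter (fun k : Fin (2 * (n - m')) => P (Sum.inr k) = i)).card = 0)
        (fun i : Fin n => (Finset.univ.filter (fun j : Fin (3 * m') => P (Sum.inl j) = i)).card)
      have h1 : ∑ i ∈ Finset.univ.filter (fun i : Fin n =>
          (Finset.univ.filter (fun k : Fin (2 * (n - m')) => P (Sum.inr k) = i)).card = 0),
          (Finset.univ.filter (fun j : Fin (3 * m') => P (Sum.inl j) = i)).card
          = 3 * (Finset.univ.filter (fun i : Fin n =>
            (Finset.univ.filter (fun k : Fin (2 * (n - m')) => P (Sum.inr k) = i)).card = 0)).card := by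
        rw [Finset.sum_congr rfl (fun i hi => ?_), Finset.sum_const, smul_eq_mul, mul_comm]
        rcases hstruct' i with ⟨_, h3, _⟩ | ⟨h2, _⟩
        · exact h3
        · simp only [Finset.mem_filter] at hi
          omega
      have h2 : ∑ i ∈ Finset.univ.filter (fun i : Fin n =>
          ¬(Finset.univ.filter (fun k : Fin (2 * (n - m')) => P (Sum.inr k) = i)).card = 0),
          (Finset.univ.filter (fun j : Fin (3 * m') => P (Sum.inl j) = i)).card = 0 := by
        apply Finset.sum_eq_zero
        intro i hi
        simp only [Finset.mem_filter] at hi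
        rcases hstruct' i with ⟨h1', _, _⟩ | ⟨_, h2'⟩
        · exact absurd h1' hi.2
        · exact h2'
      rw [h1, h2, hSB] at hsplit
      omega
    have e := Finset.equivFinOfCardEq hTscard
    have hfib : ∀ k : Fin m',
        Finset.univ.filter (fun j : Fin (3 * m') => e ⟨P (Sum.inl j), hmemT j⟩ = k)
          = Finset.univ.filter (fun j : Fin (3 * m') => P (Sum.inl j) = ((e.symm k : _) : Fin n)) := by
      intro k
      apply Finset.filter_congr
      intro j _
      rw [Equiv.apply_eq_iff_eq_symm_apply]
      constructor
      · intro h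
        exact congrArg Subtype.val h
      · intro h
        exact Subtype.ext h
    have hmachine : ∀ k : Fin m',
        ((Finset.univ.filter (fun k' : Fin (2 * (n - m')) =>
          P (Sum.inr k') = ((e.symm k : _) : Fin n))).card = 0) := by
      intro k
      have := (e.symm k).2
      simp only [Finset.mem_filter] at this
      exact this.2
    refine ⟨fun j => e ⟨P (Sum.inl j), hmemT j⟩, fun k => ?_, fun k => ?_⟩
    · rw [hfib k]
      rcases hstruct' ((e.symm k : _) : Fin n) with ⟨_, h3, _⟩ | ⟨h2, _⟩
      · exact h3
      · have := hmachine k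
        omega
    · rw [hfib k]
      rcases hstruct' ((e.symm k : _) : Fin n) with ⟨_, _, h3⟩ | ⟨h2, _⟩
      · exact h3.trans hc.symm
      · have := hmachine k
        omega
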